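/- arXiv:1306.3877 — 6 statements merged into one kernel-verified Lean document; each statement's English description precedes it below -/
import Mathlib

section
/- Let G be a finite simple undirected graph, let v be a vertex of G, and let H_v be the auxiliary graph of v. If S is a modulator of G with v ∉ S, then S ∩ (N1 ∪ N2) is a vertex cover of H_v (in particular, S contains a vertex cover of H_v). -/
variable {V : Type*}

/-- The graph obtained from `G` by deleting the vertex set `S`
(deleted vertices become isolated, which does not affect cluster-ness of the rest). -/
def SimpleGraph.deleteSet (G : SimpleGraph V) (S : Set V) : SimpleGraph V where
  Adj a b := G.Adj a b ∧ a ∉ S ∧ b ∉ S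
  symm := by
    constructor
    intro a b h
    exact ⟨h.1.symm, h.2.2, h.2.1⟩
  loopless := by
    constructor
    intro a h
    exact G.irrefl h.1

/-- `(u, v, w)` is a `P₃` in `G`: an induced path on the three distinct vertices
`u`, `v`, `w` with edges `uv` and `vw` and non-edge `uw`. -/
def IsP3 (G : SimpleGraph V) (u v w : V) : Prop :=
  G.Adj u v ∧ G.Adj v w ∧ ¬ G.Adj u w ∧ u ≠ w

/-- A cluster graph is a graph containing no `P₃`. -/
def IsClusterGraph (G : SimpleGraph V) : Prop :=
  ∀ u v w : V, ¬ IsP3 G u v w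

/-- `S` is a modulator of `G`: deleting `S` from `G` yields a cluster graph. -/
def IsModulator (G : SimpleGraph V) (S : Set V) : Prop :=
  IsClusterGraph (G.deleteSet S)

/-- A solution is a modulator of minimum cardinality. -/
def IsSolution (G : SimpleGraph V) (S : Set V) : Prop :=
  IsModulator G S ∧ ∀ T : Set V, IsModulator G T → S.ncard ≤ T.ncard

/-- `N1 G v` is the neighbourhood of `v` in `G`. -/
def N1 (G : SimpleGraph V) (v : V) : Set V := G.neighborSet v

/-- `N2 G v = N_G(N_G[v])` is the set of vertices at distance exactly `2` from `v`. -/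
def N2 (G : SimpleGraph V) (v : V) : Set V :=
  {w | w ≠ v ∧ ¬ G.Adj v w ∧ ∃ u, G.Adj v u ∧ G.Adj u w}

/-- Adjacency in the auxiliary graph `H_v`: non-edges of `G` inside `N1`,
and edges of `G` between `N1` and `N2`. -/
def HvAdj (G : SimpleGraph V) (v a b : V) : Prop :=
  (a ∈ N1 G v ∧ b ∈ N1 G v ∧ a ≠ b ∧ ¬ G.Adj a b) ∨
  (a ∈ N1 G v ∧ b ∈ N2 G v ∧ G.Adj a b) ∨
  (b ∈ N1 G v ∧ a ∈ N2 G v ∧ G.Adj a b)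

/-- `X` is a vertex cover of the auxiliary graph `H_v`: a subset of
`V(H_v) = N1 ∪ N2` meeting every edge of `H_v`. -/
def IsVCHv (G : SimpleGraph V) (v : V) (X : Set V) : Prop :=
  X ⊆ N1 G v ∪ N2 G v ∧ ∀ a b : V, HvAdj G v a b → a ∈ X ∨ b ∈ X

/-- `X` is a vertex cover of the graph `H`. -/
def IsVC (H : SimpleGraph V) (X : Set V) : Prop :=
  ∀ a b : V, H.Adj a b → a ∈ X ∨ b ∈ X

/-- The connected component of `v` in `G` is a clique. -/
def ComponentIsClique (G : SimpleGraph V) (v : V) : Prop :=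
  ∀ u w : V, G.Reachable v u → G.Reachable v w → u ≠ w → G.Adj u w

/-- The auxiliary graph `H_v` is an `s`-skein with seagulls `(x i, y i, z i)`:
it is the disjoint union of `s` seagulls (paths on three vertices with middle
vertex `y i ∈ N1` and endpoints `x i, z i ∈ N2`) and isolated vertices. -/
def IsSkein (G : SimpleGraph V) (v : V) (s : ℕ) (x y z : Fin s → V) : Prop :=
  (∀ i, x i ∈ N2 G v ∧ y i ∈ N1 G v ∧ z i ∈ N2 G v) ∧
  (∀ i, x i ≠ z i) ∧
  (∀ i j, i ≠ j → ({x i, y i, z i} ∩ {x j, y j, z j} : Set V) = ∅) ∧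
  (∀ i, HvAdj G v (x i) (y i) ∧ HvAdj G v (y i) (z i) ∧ ¬ HvAdj G v (x i) (z i)) ∧
  (∀ a b : V, HvAdj G v a b →
    ∃ i, (a = x i ∧ b = y i) ∨ (a = y i ∧ b = x i) ∨
         (a = y i ∧ b = z i) ∨ (a = z i ∧ b = y i))

/-- If `S` is a modulator with `v ∉ S`, then `S ∩ (N1 ∪ N2)` is
a vertex cover of `H_v`. -/
theorem stmt_2 [Fintype V] (G : SimpleGraph V) (v : V) (S : Set V)
    (hS : IsModulator G S) (hv : v ∉ S) :
    IsVCHv G v (S ∩ (N1 G v ∪ N2 G v)) := by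
  constructor
  · exact Set.inter_subset_right
  intro a b hab
  have key : ∀ p q r : V, G.Adj p q → G.Adj q r → ¬ G.Adj p r → p ≠ r →
      p ∈ S ∨ q ∈ S ∨ r ∈ S := by
    intro p q r h1 h2 h3 hne
    by_contra h
    push_neg at h
    exact hS p q r ⟨⟨h1, h.1, h.2.1⟩, ⟨h2, h.2.1, h.2.2⟩,
      fun hc => h3 hc.1, hne⟩
  rcases hab with ⟨ha, hb, hne, hnadj⟩ | ⟨ha, hb, hadj⟩ | ⟨hb, ha, hadj⟩
  · rcases key a v b ha.symm hb hnadj hne with h | h | h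
    · exact Or.inl ⟨h, Or.inl ha⟩
    · exact absurd h hv
    · exact Or.inr ⟨h, Or.inl hb⟩
  · rcases key v a b ha hadj hb.2.1 (Ne.symm hb.1) with h | h | h
    · exact absurd h hv
    · exact Or.inl ⟨h, Or.inl ha⟩
    · exact Or.inr ⟨h, Or.inr hb⟩
  · rcases key v b a hb hadj.symm ha.2.1 (Ne.symm ha.1) with h | h | h
    · exact absurd h hv
    · exact Or.inr ⟨h, Or.inl hb⟩
    · exact Or.inl ⟨h, Or.inr ha⟩
end

section
/- Let G be a finite simple undirected graph, let v be a vertex of G, and let H_v be the auxiliary graph of v. Let S be a modulator of G with v ∉ S, set X = S ∩ (N1 ∪ N2), and let Y be a vertex cover of H_v such that X ∩ N2 ⊆ Y ∩ N2. Then T = (S \ X) ∪ Y is also a modulator of G. -/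
variable {V : Type*}

/-- Let `S` be a modulator with `v ∉ S`, `X = S ∩ (N1 ∪ N2)`, and
let `Y` be a vertex cover of `H_v` with `X ∩ N2 ⊆ Y ∩ N2`. Then
`T = (S \ X) ∪ Y` is also a modulator. -/
theorem stmt_4 [Fintype V] (G : SimpleGraph V) (v : V) (S X Y : Set V)
    (hS : IsModulator G S) (hv : v ∉ S)
    (hX : X = S ∩ (N1 G v ∪ N2 G v))
    (hY : IsVCHv G v Y)
    (hXY : X ∩ N2 G v ⊆ Y ∩ N2 G v) :
    IsModulator G ((S \ X) ∪ Y) := by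
  intro a b c hP3
  obtain ⟨⟨hab, haT, hbT⟩, ⟨hbc, _, hcT⟩, hnac, hac⟩ := hP3
  set T : Set V := (S \ X) ∪ Y with hT
  have haY : a ∉ Y := fun h => haT (Or.inr h)
  have hbY : b ∉ Y := fun h => hbT (Or.inr h)
  have hcY : c ∉ Y := fun h => hcT (Or.inr h)
  -- A = N1 \ Y
  set A : Set V := {u | u ∈ N1 G v ∧ u ∉ Y} with hA
  -- A ∪ {v} is a clique
  have clique : ∀ u w : V, (u ∈ A ∨ u = v) → (w ∈ A ∨ w = v) → u ≠ w → G.Adj u w := by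
    rintro u w (hu | huv) (hw | hwv) huw
    · by_contra hadj
      rcases hY.2 u w (Or.inl ⟨hu.1, hw.1, huw, hadj⟩) with h | h
      · exact hu.2 h
      · exact hw.2 h
    · rw [hwv]; exact hu.1.symm
    · rw [huv]; exact hw.1
    · rw [huv, hwv] at huw; exact absurd rfl huw
  -- no G-edges between A and N2 \ Y
  have noedge : ∀ u w : V, u ∈ A → w ∈ N2 G v → w ∉ Y → ¬ G.Adj u w := by
    intro u w hu hw hwY hadj
    rcases hY.2 u w (Or.inr (Or.inl ⟨hu.1, hw, hadj⟩)) with h | h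
    · exact hu.2 h
    · exact hwY h
  -- any vertex of S avoiding T lies in A
  have loc : ∀ u : V, u ∉ T → u ∈ S → u ∈ A := by
    intro u huT huS
    have huY : u ∉ Y := fun h => huT (Or.inr h)
    have huX : u ∈ X := by
      by_contra h
      exact huT (Or.inl ⟨huS, h⟩)
    have : u ∈ N1 G v ∪ N2 G v := (hX ▸ huX).2
    rcases this with h | h
    · exact ⟨h, huY⟩
    · exact absurd (hXY ⟨huX, h⟩).1 huY
  -- neighbours of A avoiding Y are in A ∪ {v}
  have neigh : ∀ u w : V, u ∈ A → G.Adj u w → w ∉ Y → (w ∈ A ∨ w = v) := by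
    intro u w hu hadj hwY
    by_cases hwv : w = v
    · exact Or.inr hwv
    by_cases hvw : G.Adj v w
    · exact Or.inl ⟨hvw, hwY⟩
    · exact absurd hadj (noedge u w hu ⟨hwv, hvw, u, hu.1, hadj⟩ hwY)
  have hGac : ¬ G.Adj a c := fun h => hnac ⟨h, haT, hcT⟩
  -- if b is in A ∪ {v}, contradiction
  have hbcase : ¬ (b ∈ A ∨ b = v) := by
    intro hb
    have ha' : a ∈ A ∨ a = v := by
      rcases hb with hb | hbv
      · exact neigh b a hb hab.symm haY
      · rw [hbv] at hab
        by_cases hav : a = v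
        · exact Or.inr hav
        · exact Or.inl ⟨hab.symm, haY⟩
    have hc' : c ∈ A ∨ c = v := by
      rcases hb with hb | hbv
      · exact neigh b c hb hbc hcY
      · rw [hbv] at hbc
        by_cases hcv : c = v
        · exact Or.inr hcv
        · exact Or.inl ⟨hbc, hcY⟩
    exact hGac (clique a c ha' hc' hac)
  have haA : a ∉ A := fun h => hbcase (neigh a b h hab hbY)
  have hcA : c ∉ A := fun h => hbcase (neigh c b h hbc.symm hbY)
  have hbA : b ∉ A := fun h => hbcase (Or.inl h)
  have haS : a ∉ S := fun h => haA (loc a haT h)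
  have hbS : b ∉ S := fun h => hbA (loc b hbT h)
  have hcS : c ∉ S := fun h => hcA (loc c hcT h)
  exact hS a b c ⟨⟨hab, haS, hbS⟩, ⟨hbc, hbS, hcS⟩, fun h => hGac h.1, hac⟩
end

section
/- Let G be a finite simple undirected graph, let v be a vertex of G, and let H_v be the auxiliary graph of v. Let S be a modulator of G with v ∉ S and set X = S ∩ (N1 ∪ N2). Suppose Y is a vertex cover of H_v which either dominates X or is equivalent to X. Then T = (S \ X) ∪ Y is also a modulator of G and |T| ≤ |S|. -/
variable {V : Type*}

/-- Let `S` be a modulator with `v ∉ S` and `X = S ∩ (N1 ∪ N2)`.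
If `Y` is a vertex cover of `H_v` which dominates `X` or is equivalent to `X`,
then `T = (S \ X) ∪ Y` is a modulator with `|T| ≤ |S|`. -/
theorem stmt_5 [Fintype V] (G : SimpleGraph V) (v : V) (S X Y : Set V)
    (hS : IsModulator G S) (hv : v ∉ S)
    (hX : X = S ∩ (N1 G v ∪ N2 G v))
    (hY : IsVCHv G v Y)
    (hdom :
      -- `Y` dominates `X`
      (Y.ncard ≤ X.ncard ∧ X ∩ N2 G v ⊆ Y ∩ N2 G v ∧
        (Y.ncard < X.ncard ∨ X ∩ N2 G v ⊂ Y ∩ N2 G v)) ∨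
      -- or `Y` is equivalent to `X`
      (X ∩ N2 G v = Y ∩ N2 G v ∧ (X ∩ N1 G v).ncard = (Y ∩ N1 G v).ncard)) :
    IsModulator G ((S \ X) ∪ Y) ∧ ((S \ X) ∪ Y).ncard ≤ S.ncard := by
  classical
  set T := (S \ X) ∪ Y with hT
  have hvN1 : v ∉ N1 G v := by simp [N1]
  have hvN2 : v ∉ N2 G v := fun h => h.1 rfl
  have hvY : v ∉ Y := fun h => (hY.1 h).elim hvN1 hvN2
  have hvT : v ∉ T := by
    intro h; rcases h with h | h
    · exact hv h.1
    · exact hvY h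
  have hXsub : X ⊆ N1 G v ∪ N2 G v := by rw [hX]; exact Set.inter_subset_right
  have hXS : X ⊆ S := by rw [hX]; exact Set.inter_subset_left
  have hN12 : Disjoint (N1 G v) (N2 G v) := by
    rw [Set.disjoint_left]; intro a ha1 ha2; exact ha2.2.1 ha1
  -- |Y| ≤ |X|
  have hsplit : ∀ Z : Set V, Z ⊆ N1 G v ∪ N2 G v →
      Z.ncard = (Z ∩ N1 G v).ncard + (Z ∩ N2 G v).ncard := by
    intro Z hZ
    have h1 : Z = (Z ∩ N1 G v) ∪ (Z ∩ N2 G v) := by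
      rw [← Set.inter_union_distrib_left, Set.inter_eq_self_of_subset_left hZ]
    conv_lhs => rw [h1]
    exact Set.ncard_union_eq (hN12.mono Set.inter_subset_right Set.inter_subset_right)
      (Set.toFinite _) (Set.toFinite _)
  have hYX : Y.ncard ≤ X.ncard := by
    rcases hdom with ⟨h1, _⟩ | ⟨h1, h2⟩
    · exact h1
    · rw [hsplit Y hY.1, hsplit X hXsub, h1, h2]
  -- key closure property
  have hR : ∀ a b : V, (a = v ∨ a ∈ N1 G v \ Y) → (G.deleteSet T).Adj a b →
      (b = v ∨ b ∈ N1 G v \ Y) := by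
    intro a b ha hab
    obtain ⟨hGab, haT, hbT⟩ := hab
    have hbY : b ∉ Y := fun h => hbT (Or.inr h)
    rcases ha with rfl | ⟨ha1, haY⟩
    · exact Or.inr ⟨hGab, hbY⟩
    · by_cases hbv : b = v
      · exact Or.inl hbv
      by_cases hb1 : G.Adj v b
      · exact Or.inr ⟨hb1, hbY⟩
      · have hb2 : b ∈ N2 G v := ⟨hbv, hb1, a, ha1, hGab⟩
        have hadj : HvAdj G v a b := Or.inr (Or.inl ⟨ha1, hb2, hGab⟩)
        rcases hY.2 a b hadj with h | h
        · exact absurd h haY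
        · exact absurd h hbY
  have hreach : ∀ u : V, (G.deleteSet T).Reachable v u → u = v ∨ u ∈ N1 G v \ Y := by
    intro u hu
    obtain ⟨p⟩ := hu
    have key : ∀ (a b : V) (p : (G.deleteSet T).Walk a b),
        (a = v ∨ a ∈ N1 G v \ Y) → (b = v ∨ b ∈ N1 G v \ Y) := by
      intro a b p
      induction p with
      | nil => exact id
      | cons h q ih => intro ha; exact ih (hR _ _ ha h)
    exact key v u p (Or.inl rfl)
  have hclique : ∀ u w : V, (G.deleteSet T).Reachable v u → (G.deleteSet T).Reachable v w →
      u ≠ w → G.Adj u w := by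
    intro u w hu hw huw
    rcases hreach u hu with rfl | ⟨hu1, huY⟩
    · rcases hreach w hw with rfl | ⟨hw1, hwY⟩
      · exact absurd rfl huw
      · exact hw1
    · rcases hreach w hw with rfl | ⟨hw1, hwY⟩
      · exact hu1.symm
      · by_contra hnadj
        have hadj : HvAdj G v u w := Or.inl ⟨hu1, hw1, huw, hnadj⟩
        rcases hY.2 u w hadj with h | h
        · exact huY h
        · exact hwY h
  constructor
  · intro u m w hp3
    obtain ⟨hum, hmw, hnuw, hne⟩ := hp3
    have huT := hum.2.1
    have hmT := hum.2.2
    have hwT := hmw.2.2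
    by_cases hrm : (G.deleteSet T).Reachable v m
    · have hradj : G.Adj u w :=
        hclique u w (hrm.trans hum.symm.reachable) (hrm.trans hmw.reachable) hne
      exact hnuw ⟨hradj, huT, hwT⟩
    · have key : ∀ a : V, a ∉ T → ¬ (G.deleteSet T).Reachable v a → a ∉ S := by
        intro a haT hra haS
        have haX : a ∈ X := by
          by_contra h
          exact haT (Or.inl ⟨haS, h⟩)
        rcases hXsub haX with h1 | h2
        · exact hra (SimpleGraph.Adj.reachable ⟨h1, hvT, haT⟩)
        · have haY : a ∈ Y := by
            rcases hdom with ⟨_, hsub, _⟩ | ⟨heq, _⟩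
            · exact (hsub ⟨haX, h2⟩).1
            · exact (heq.subset ⟨haX, h2⟩).1
          exact haT (Or.inr haY)
      have hru : ¬ (G.deleteSet T).Reachable v u :=
        fun h => hrm (h.trans hum.reachable)
      have hrw : ¬ (G.deleteSet T).Reachable v w :=
        fun h => hrm (h.trans hmw.symm.reachable)
      have hrm' : ¬ (G.deleteSet T).Reachable v m := hrm
      exact hS u m w ⟨⟨hum.1, key u huT hru, key m hmT hrm'⟩,
        ⟨hmw.1, key m hmT hrm', key w hwT hrw⟩,
        (fun h => hnuw ⟨h.1, huT, hwT⟩), hne⟩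
  · calc T.ncard ≤ (S \ X).ncard + Y.ncard := Set.ncard_union_le _ _
      _ ≤ (S \ X).ncard + X.ncard := Nat.add_le_add_left hYX _
      _ = S.ncard := by
          rw [Set.ncard_diff hXS]
          exact Nat.sub_add_cancel (Set.ncard_le_ncard hXS (Set.toFinite S))
end

section
/- Let G be a finite simple undirected graph, let v be a vertex of G, and let H_v be the auxiliary graph of v. Suppose X is a vertex cover of H_v with v ∉ X. Then there exists a solution S (a minimum-size modulator of G) such that either v ∉ S, or |X \ S| ≥ 2. -/
variable {V : Type*}

/-- If `X` is a vertex cover of `H_v` with `v ∉ X`, then there is a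
solution `S` such that `v ∉ S` or `|X \ S| ≥ 2`. -/
theorem stmt_6 [Fintype V] (G : SimpleGraph V) (v : V) (X : Set V)
    (hX : IsVCHv G v X) (hvX : v ∉ X) :
    ∃ S : Set V, IsSolution G S ∧ (v ∉ S ∨ 2 ≤ (X \ S).ncard) := by

  classical
  -- existence of a solution
  have hex : ∃ n, ∃ S : Set V, IsModulator G S ∧ S.ncard = n := by
    refine ⟨(Set.univ : Set V).ncard, Set.univ, ?_, rfl⟩
    intro a b c h
    exact h.1.2.1 (Set.mem_univ a)
  obtain ⟨S, hSmod, hScard⟩ := Nat.find_spec hex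
  have hSsol : IsSolution G S := by
    refine ⟨hSmod, fun T hT => ?_⟩
    rw [hScard]
    exact Nat.find_min' hex ⟨T, hT, rfl⟩
  by_cases hv : v ∈ S
  · by_cases h2 : 2 ≤ (X \ S).ncard
    · exact ⟨S, hSsol, Or.inr h2⟩
    · -- swap argument
      set S' : Set V := (S \ {v}) ∪ (X \ S) with hS'def
      have hXS' : X ⊆ S' := by
        intro a ha
        by_cases haS : a ∈ S
        · exact Or.inl ⟨haS, fun h => hvX (h ▸ ha)⟩
        · exact Or.inr ⟨ha, haS⟩
      have hvS' : v ∉ S' := by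
        rintro (⟨_, h⟩ | ⟨h, _⟩)
        · exact h rfl
        · exact hvX h
      have hmod : IsModulator G S' := by
        intro u m w hP3
        obtain ⟨⟨hum, hu, hm⟩, ⟨hmw, _, hw⟩, hnuw, hne⟩ := hP3
        have hnuw' : ¬ G.Adj u w := fun h => hnuw ⟨h, hu, hw⟩
        by_cases hmv : m = v
        · have h1 : u ∈ N1 G v := (hmv ▸ hum).symm
          have h2 : w ∈ N1 G v := (hmv ▸ hmw)
          have := hX.2 u w (Or.inl ⟨h1, h2, hne, hnuw'⟩)
          rcases this with h | h
          · exact hu (hXS' h)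
          · exact hw (hXS' h)
        · by_cases huv : u = v
          · have h1 : m ∈ N1 G v := huv ▸ hum
            have h2 : w ∈ N2 G v :=
              ⟨fun h => hne (huv.trans h.symm), fun h => hnuw' (huv ▸ h), m, huv ▸ hum, hmw⟩
            have := hX.2 m w (Or.inr (Or.inl ⟨h1, h2, hmw⟩))
            rcases this with h | h
            · exact hm (hXS' h)
            · exact hw (hXS' h)
          · by_cases hwv : w = v
            · have h1 : m ∈ N1 G v := (hwv ▸ hmw).symm
              have h2 : u ∈ N2 G v :=
                ⟨fun h => hne (h.trans hwv.symm), fun h => hnuw' (hwv ▸ h.symm),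
                  m, (hwv ▸ hmw).symm, hum.symm⟩
              have := hX.2 m u (Or.inr (Or.inl ⟨h1, h2, hum.symm⟩))
              rcases this with h | h
              · exact hm (hXS' h)
              · exact hu (hXS' h)
            · -- none equals v: P3 survives in G \ S
              have huS : u ∉ S := fun h => hu (Or.inl ⟨h, huv⟩)
              have hmS : m ∉ S := fun h => hm (Or.inl ⟨h, hmv⟩)
              have hwS : w ∉ S := fun h => hw (Or.inl ⟨h, hwv⟩)
              exact hSmod u m w ⟨⟨hum, huS, hmS⟩, ⟨hmw, hmS, hwS⟩,
                fun h => hnuw ⟨h.1, hu, hw⟩, hne⟩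
      have hcard : S'.ncard ≤ S.ncard := by
        have h1 : S'.ncard ≤ (S \ {v}).ncard + (X \ S).ncard := Set.ncard_union_le _ _
        have h2 : (S \ {v}).ncard = S.ncard - 1 := Set.ncard_diff_singleton_of_mem hv
        have h3 : 0 < S.ncard := (Set.ncard_pos (Set.toFinite S)).mpr ⟨v, hv⟩
        have h4 : (X \ S).ncard ≤ 1 := by omega
        omega
      exact ⟨S', ⟨hmod, fun T hT => le_trans hcard (hSsol.2 T hT)⟩, Or.inl hvS'⟩
  · exact ⟨S, hSsol, Or.inl hv⟩
end

section
/- Let G be a finite simple undirected graph, let v be a vertex of G, and let H_v be the auxiliary graph of v. If the minimum size of a vertex cover of H_v equals 1, then there exists a solution S (a minimum-size modulator of G) with v ∉ S. -/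
variable {V : Type*}

theorem exists_solution [Fintype V] (G : SimpleGraph V) : ∃ S : Set V, IsSolution G S := by
  have hPne : (Set.univ : Set V).ncard ∈ {n : ℕ | ∃ S : Set V, IsModulator G S ∧ S.ncard = n} := by
    refine ⟨Set.univ, ?_, rfl⟩
    intro u w x h
    exact h.1.2.1 (Set.mem_univ u)
  obtain ⟨S, hS, hcard⟩ := Nat.sInf_mem ⟨_, hPne⟩
  exact ⟨S, hS, fun T hT => hcard ▸ Nat.sInf_le ⟨T, hT, rfl⟩⟩

theorem stmt_7_aux [Fintype V] (G : SimpleGraph V) (v : V) (c : V)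
    (hcmem : c ∈ N1 G v ∪ N2 G v)
    (hcov : ∀ a b : V, HvAdj G v a b → a = c ∨ b = c)
    (S : Set V) (hS : IsSolution G S) (hvS : v ∈ S) :
    ∃ S' : Set V, IsSolution G S' ∧ v ∉ S' := by
  have hvc : v ≠ c := by
    rintro rfl
    rcases hcmem with h | h
    · exact G.irrefl h
    · exact h.1 rfl
  set K : Set V := insert v ((N1 G v) \ {c}) with hK
  have hKmem : ∀ u, u ∈ K ↔ u = v ∨ (u ∈ N1 G v ∧ u ≠ c) := by
    intro u
    simp [hK, Set.mem_insert_iff, Set.mem_diff]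
  -- Claim A: K is closed under G-adjacency avoiding c
  have claimA : ∀ u ∈ K, ∀ w, G.Adj u w → w ≠ c → w ∈ K := by
    intro u hu w hadj hwc
    rcases (hKmem u).1 hu with rfl | ⟨huN1, huc⟩
    · exact (hKmem w).2 (Or.inr ⟨hadj, hwc⟩)
    · by_cases hwv : w = v
      · exact (hKmem w).2 (Or.inl hwv)
      by_cases hvw : G.Adj v w
      · exact (hKmem w).2 (Or.inr ⟨hvw, hwc⟩)
      · have hw2 : w ∈ N2 G v := ⟨hwv, hvw, u, huN1, hadj⟩
        rcases hcov u w (Or.inr (Or.inl ⟨huN1, hw2, hadj⟩)) with h | h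
        · exact absurd h huc
        · exact absurd h hwc
  -- Claim B: K is a clique in G
  have claimB : ∀ u ∈ K, ∀ w ∈ K, u ≠ w → G.Adj u w := by
    intro u hu w hw huw
    rcases (hKmem u).1 hu with rfl | ⟨huN1, huc⟩
    · rcases (hKmem w).1 hw with rfl | ⟨hwN1, _⟩
      · exact absurd rfl huw
      · exact hwN1
    · rcases (hKmem w).1 hw with rfl | ⟨hwN1, hwc⟩
      · exact huN1.symm
      · by_contra hne
        rcases hcov u w (Or.inl ⟨huN1, hwN1, huw, hne⟩) with h | h
        · exact huc h
        · exact hwc h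
  refine ⟨insert c (S \ {v}), ⟨?_, ?_⟩, ?_⟩
  · -- modulator
    rintro a b d ⟨⟨hab, haS, hbS⟩, ⟨hbd, _, hdS⟩, hnad, had⟩
    have hac : a ≠ c := fun h => haS (Or.inl h)
    have hbc : b ≠ c := fun h => hbS (Or.inl h)
    have hdc : d ≠ c := fun h => hdS (Or.inl h)
    by_cases hv : a = v ∨ b = v ∨ d = v
    · -- all three in K; contradiction with clique
      have hKabd : a ∈ K ∧ b ∈ K ∧ d ∈ K := by
        rcases hv with rfl | rfl | rfl
        · have hKa : a ∈ K := (hKmem a).2 (Or.inl rfl)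
          have hKb : b ∈ K := claimA a hKa b hab hbc
          exact ⟨hKa, hKb, claimA b hKb d hbd hdc⟩
        · have hKb : b ∈ K := (hKmem b).2 (Or.inl rfl)
          exact ⟨claimA b hKb a hab.symm hac, hKb, claimA b hKb d hbd hdc⟩
        · have hKd : d ∈ K := (hKmem d).2 (Or.inl rfl)
          have hKb : b ∈ K := claimA d hKd b hbd.symm hbc
          exact ⟨claimA b hKb a hab.symm hac, hKb, hKd⟩
      exact hnad ⟨claimB a hKabd.1 d hKabd.2.2 had, haS, hdS⟩
    · push_neg at hv
      have haS' : a ∉ S := fun h => haS (Or.inr ⟨h, hv.1⟩)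
      have hbS' : b ∉ S := fun h => hbS (Or.inr ⟨h, hv.2.1⟩)
      have hdS' : d ∉ S := fun h => hdS (Or.inr ⟨h, hv.2.2⟩)
      exact hS.1 a b d ⟨⟨hab, haS', hbS'⟩, ⟨hbd, hbS', hdS'⟩,
        fun h => hnad ⟨h.1, haS, hdS⟩, had⟩
  · -- minimality
    intro T hT
    have hle : (insert c (S \ {v})).ncard ≤ S.ncard := by
      have h1 : (insert c (S \ {v})).ncard ≤ (S \ {v}).ncard + 1 :=
        Set.ncard_insert_le _ _
      have h2 : (S \ {v}).ncard + 1 = S.ncard :=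
        Set.ncard_diff_singleton_add_one hvS (Set.toFinite S)
      omega
    exact hle.trans (hS.2 T hT)
  · -- v not in new set
    rintro (h | h)
    · exact hvc h
    · exact h.2 rfl

/-- If `MinVC(H_v) = 1` then there is a solution not containing `v`. -/
theorem stmt_7 [Fintype V] (G : SimpleGraph V) (v : V)
    (hvc1 : ∃ X : Set V, IsVCHv G v X ∧ X.ncard = 1)
    (hmin : ∀ Y : Set V, IsVCHv G v Y → 1 ≤ Y.ncard) :
    ∃ S : Set V, IsSolution G S ∧ v ∉ S := by
  obtain ⟨S, hS⟩ := exists_solution G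
  by_cases hvS : v ∈ S
  · obtain ⟨X, hX, hX1⟩ := hvc1
    obtain ⟨c, rfl⟩ := Set.ncard_eq_one.mp hX1
    have hcmem : c ∈ N1 G v ∪ N2 G v := hX.1 rfl
    have hcov : ∀ a b : V, HvAdj G v a b → a = c ∨ b = c := by
      intro a b h
      simpa using hX.2 a b h
    exact stmt_7_aux G v c hcmem hcov S hS hvS
  · exact ⟨S, hS, hvS⟩
end

section
/- Let G be a finite simple undirected graph, let v be a vertex of G, and let H_v be the auxiliary graph of v. Let C be a cycle in H_v on 2l vertices (l ≥ 2) whose vertices alternate between N1 and N2, so that |C ∩ N2| = l. If S is a modulator of G with v ∉ S, then T = (S \ V(C)) ∪ (C ∩ N2) is also a modulator of G, and |T| ≤ |S|. -/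
variable {V : Type*}

/-- Let `C` be a cycle in `H_v` on `2l` vertices (`l ≥ 2`), being a
connected component of `H_v`, whose vertices alternate between `N1` and `N2`
(so `|C ∩ N2| = l`). If `S` is a modulator with `v ∉ S`, then
`T = (S \ V(C)) ∪ (C ∩ N2)` is a modulator with `|T| ≤ |S|`. -/
theorem stmt_11 [Fintype V] (G : SimpleGraph V) (v : V) (l : ℕ) (hl : 2 ≤ l)
    (c : ZMod (2 * l) → V)
    (hinj : Function.Injective c)
    (hcyc : ∀ i : ZMod (2 * l), HvAdj G v (c i) (c (i + 1)))
    (hcomp : ∀ (i : ZMod (2 * l)) (b : V),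
      HvAdj G v (c i) b → b = c (i + 1) ∨ b = c (i - 1))
    (halt : ∀ i : ZMod (2 * l),
      (i.val % 2 = 0 → c i ∈ N1 G v) ∧ (i.val % 2 = 1 → c i ∈ N2 G v))
    (hcard : (Set.range c ∩ N2 G v).ncard = l)
    (S : Set V) (hS : IsModulator G S) (hv : v ∉ S) :
    IsModulator G ((S \ Set.range c) ∪ (Set.range c ∩ N2 G v)) ∧
      ((S \ Set.range c) ∪ (Set.range c ∩ N2 G v)).ncard ≤ S.ncard := by
  classical
  haveI : NeZero (2 * l) := ⟨by omega⟩
  haveI : Fact (1 < 2 * l) := ⟨by omega⟩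
  set C := Set.range c with hCdef
  set T := (S \ C) ∪ (C ∩ N2 G v) with hTdef
  -- basic facts
  have hN1N2 : ∀ a, a ∈ N1 G v → a ∈ N2 G v → False := by
    intro a h1 h2; exact h2.2.1 h1
  have hvalparity : ∀ i : ZMod (2*l), (i+1).val % 2 = (i.val + 1) % 2 := by
    intro i
    have h1 : (1 : ZMod (2*l)).val = 1 := ZMod.val_one _
    rw [ZMod.val_add, h1, Nat.mod_mod_of_dvd _ ⟨l, rfl⟩]
  have hCN : ∀ i : ZMod (2*l), c i ∈ N1 G v ∨ c i ∈ N2 G v := by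
    intro i
    rcases Nat.mod_two_eq_zero_or_one i.val with h | h
    · exact Or.inl ((halt i).1 h)
    · exact Or.inr ((halt i).2 h)
  have hAlt : ∀ i : ZMod (2*l), c i ∈ N1 G v → c (i+1) ∈ N2 G v ∧ c (i-1) ∈ N2 G v := by
    intro i hi
    have hpar : i.val % 2 = 0 := by
      rcases Nat.mod_two_eq_zero_or_one i.val with h | h
      · exact h
      · exact absurd ((halt i).2 h) (fun h2 => hN1N2 _ hi h2)
    constructor
    · apply (halt _).2
      rw [hvalparity]; omega
    · apply (halt _).2
      have h2 := hvalparity (i-1)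
      rw [sub_add_cancel] at h2
      omega
  have hsymm : ∀ a b, HvAdj G v a b → HvAdj G v b a := by
    intro a b h
    rcases h with ⟨h1,h2,h3,h4⟩ | ⟨h1,h2,h3⟩ | ⟨h1,h2,h3⟩
    · exact Or.inl ⟨h2,h1,h3.symm,fun h => h4 h.symm⟩
    · exact Or.inr (Or.inr ⟨h1,h2,h3.symm⟩)
    · exact Or.inr (Or.inl ⟨h1,h2,h3.symm⟩)
  have noP3S : ∀ p q r, p ∉ S → q ∉ S → r ∉ S → G.Adj p q → G.Adj q r →
      ¬G.Adj p r → p ≠ r → False := by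
    intro p q r hp hq hr h1 h2 h3 h4
    exact hS p q r ⟨⟨h1,hp,hq⟩, ⟨h2,hq,hr⟩, fun h => h3 h.1, h4⟩
  have cover : ∀ a b, HvAdj G v a b → a ∈ S ∨ b ∈ S := by
    intro a b h
    by_contra hab
    push_neg at hab
    rcases h with ⟨h1,h2,h3,h4⟩ | ⟨h1,h2,h3⟩ | ⟨h1,h2,h3⟩
    · have ha : G.Adj v a := h1
      have hb : G.Adj v b := h2
      exact noP3S a v b hab.1 hv hab.2 ha.symm hb h4 h3
    · have ha : G.Adj v a := h1
      exact noP3S v a b hv hab.1 hab.2 ha h3 h2.2.1 (Ne.symm h2.1)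
    · have hb : G.Adj v b := h1
      exact noP3S v b a hv hab.2 hab.1 hb h3.symm h2.2.1 (Ne.symm h2.1)
  -- structural facts about cycle vertices in N1
  have adjAll : ∀ i : ZMod (2*l), c i ∈ N1 G v → ∀ b, b ∈ N1 G v → b ≠ c i → G.Adj (c i) b := by
    intro i hi b hb hne
    by_contra hadj
    have h := hcomp i b (Or.inl ⟨hi, hb, Ne.symm hne, hadj⟩)
    obtain ⟨h1, h2⟩ := hAlt i hi
    rcases h with h | h
    · exact hN1N2 b hb (by rw [h]; exact h1)
    · exact hN1N2 b hb (by rw [h]; exact h2)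
  have nbhd : ∀ i, c i ∈ N1 G v → ∀ b, G.Adj (c i) b →
      b = v ∨ b ∈ N1 G v ∨ b = c (i+1) ∨ b = c (i-1) := by
    intro i hi b hadj
    by_cases hbv : b = v
    · exact Or.inl hbv
    by_cases hvb : G.Adj v b
    · exact Or.inr (Or.inl hvb)
    have hbN2 : b ∈ N2 G v := ⟨hbv, hvb, c i, hi, hadj⟩
    have h := hcomp i b (Or.inr (Or.inl ⟨hi, hbN2, hadj⟩))
    tauto
  -- membership helpers for T
  have memN1T : ∀ y, y ∉ T → y ∈ C → y ∈ N1 G v := by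
    intro y hyT hyC
    obtain ⟨i, rfl⟩ := hyC
    rcases hCN i with h | h
    · exact h
    · exact absurd (Or.inr ⟨⟨i, rfl⟩, h⟩) hyT
  have memSC : ∀ y, y ∉ T → y ∈ S → y ∈ C := by
    intro y hyT hyS
    by_contra h
    exact hyT (Or.inl ⟨hyS, h⟩)
  have hc1T : ∀ i : ZMod (2*l), c i ∈ N1 G v → c (i+1) ∈ T ∧ c (i-1) ∈ T := by
    intro i hi
    obtain ⟨h1, h2⟩ := hAlt i hi
    exact ⟨Or.inr ⟨⟨_, rfl⟩, h1⟩, Or.inr ⟨⟨_, rfl⟩, h2⟩⟩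
  -- case A : middle vertex on the cycle
  have caseA : ∀ u w x, G.Adj u w → G.Adj w x → ¬ G.Adj u x → u ≠ x →
      u ∉ T → w ∉ T → x ∉ T → w ∈ C → False := by
    intro u w x h1 h2 h3 h4 hu hw hx hwC
    obtain ⟨i, rfl⟩ := hwC
    have hiN1 : c i ∈ N1 G v := memN1T _ hw ⟨i, rfl⟩
    have hcT := hc1T i hiN1
    have hu' : u = v ∨ u ∈ N1 G v := by
      rcases nbhd i hiN1 u h1.symm with h | h | h | h
      · exact Or.inl h
      · exact Or.inr h
      · exact absurd (by rw [h]; exact hcT.1) hu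
      · exact absurd (by rw [h]; exact hcT.2) hu
    have hx' : x = v ∨ x ∈ N1 G v := by
      rcases nbhd i hiN1 x h2 with h | h | h | h
      · exact Or.inl h
      · exact Or.inr h
      · exact absurd (by rw [h]; exact hcT.1) hx
      · exact absurd (by rw [h]; exact hcT.2) hx
    rcases hu' with huv | huN1
    · rcases hx' with hxv | hxN1
      · exact h4 (by rw [huv, hxv])
      · have hvx : G.Adj v x := hxN1
        exact h3 (by rw [huv]; exact hvx)
    · rcases hx' with hxv | hxN1
      · have hvu : G.Adj v u := huN1
        exact h3 (by rw [hxv]; exact hvu.symm)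
      · have hHv : HvAdj G v u x := Or.inl ⟨huN1, hxN1, h4, h3⟩
        by_cases huC : u ∈ C
        · obtain ⟨j, rfl⟩ := huC
          have hjN1 : c j ∈ N1 G v := memN1T _ hu ⟨j, rfl⟩
          rcases hcomp j x hHv with h | h
          · exact hN1N2 x hxN1 (by rw [h]; exact (hAlt j hjN1).1)
          · exact hN1N2 x hxN1 (by rw [h]; exact (hAlt j hjN1).2)
        by_cases hxC : x ∈ C
        · obtain ⟨j, rfl⟩ := hxC
          have hjN1 : c j ∈ N1 G v := memN1T _ hx ⟨j, rfl⟩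
          rcases hcomp j u (hsymm _ _ hHv) with h | h
          · exact hN1N2 u huN1 (by rw [h]; exact (hAlt j hjN1).1)
          · exact hN1N2 u huN1 (by rw [h]; exact (hAlt j hjN1).2)
        have huS : u ∉ S := fun h => huC (memSC u hu h)
        have hxS : x ∉ S := fun h => hxC (memSC x hx h)
        have ha : G.Adj v u := huN1
        have hb : G.Adj v x := hxN1
        exact noP3S u v x huS hv hxS ha.symm hb h3 h4
  -- case B : an endpoint on the cycle, middle off the cycle
  have caseB : ∀ u w x, G.Adj u w → G.Adj w x → ¬ G.Adj u x → u ≠ x →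
      u ∉ T → w ∉ T → x ∉ T → u ∈ C → w ∉ C → False := by
    intro u w x h1 h2 h3 h4 hu hw hx huC hwC
    obtain ⟨i, rfl⟩ := huC
    have hiN1 : c i ∈ N1 G v := memN1T _ hu ⟨i, rfl⟩
    have hw' : w = v ∨ w ∈ N1 G v := by
      rcases nbhd i hiN1 w h1 with h | h | h | h
      · exact Or.inl h
      · exact Or.inr h
      · exact absurd (⟨i+1, h.symm⟩ : w ∈ C) hwC
      · exact absurd (⟨i-1, h.symm⟩ : w ∈ C) hwC
    rcases hw' with hwv | hwN1
    · have hxN1 : x ∈ N1 G v := by rw [← hwv]; exact h2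
      have hHv : HvAdj G v (c i) x := Or.inl ⟨hiN1, hxN1, h4, h3⟩
      rcases hcomp i x hHv with h | h
      · exact hN1N2 x hxN1 (by rw [h]; exact (hAlt i hiN1).1)
      · exact hN1N2 x hxN1 (by rw [h]; exact (hAlt i hiN1).2)
    · have hxv : x ≠ v := by
        intro hxe
        have ha : G.Adj v (c i) := hiN1
        exact h3 (by rw [hxe]; exact ha.symm)
      have hxN1' : ¬ G.Adj v x := by
        intro hvx
        exact h3 (adjAll i hiN1 x hvx (Ne.symm h4))
      have hxN2 : x ∈ N2 G v := ⟨hxv, hxN1', w, hwN1, h2⟩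
      have hHv : HvAdj G v w x := Or.inr (Or.inl ⟨hwN1, hxN2, h2⟩)
      by_cases hxC : x ∈ C
      · obtain ⟨j, rfl⟩ := hxC
        rcases hcomp j w (hsymm _ _ hHv) with h | h
        · exact hwC ⟨j+1, h.symm⟩
        · exact hwC ⟨j-1, h.symm⟩
      · have hwS : w ∉ S := fun h => hwC (memSC w hw h)
        have hxS : x ∉ S := fun h => hxC (memSC x hx h)
        have ha : G.Adj v w := hwN1
        exact noP3S v w x hv hwS hxS ha h2 hxN1' (Ne.symm hxv)
  constructor
  · -- modulator
    intro u w x hP3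
    obtain ⟨⟨h1, hu, hw⟩, ⟨h2, _, hx⟩, h3, h4⟩ := hP3
    have h3' : ¬ G.Adj u x := fun h => h3 ⟨h, hu, hx⟩
    by_cases hwC : w ∈ C
    · exact caseA u w x h1 h2 h3' h4 hu hw hx hwC
    by_cases huC : u ∈ C
    · exact caseB u w x h1 h2 h3' h4 hu hw hx huC hwC
    by_cases hxC : x ∈ C
    · exact caseB x w u h2.symm h1.symm (fun h => h3' h.symm) (Ne.symm h4) hx hw hu hxC hwC
    · exact noP3S u w x (fun h => huC (memSC u hu h)) (fun h => hwC (memSC w hw h))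
        (fun h => hxC (memSC x hx h)) h1 h2 h3' h4
  · -- cardinality
    have hval : ∀ j : Fin l, ((2*(j:ℕ) : ℕ) : ZMod (2*l)).val = 2*(j:ℕ) := fun j =>
      ZMod.val_natCast_of_lt (by omega)
    have hval1 : ∀ j : Fin l, (((2*(j:ℕ) : ℕ) : ZMod (2*l)) + 1).val = 2*(j:ℕ)+1 := by
      intro j
      rw [ZMod.val_add, hval, ZMod.val_one]
      exact Nat.mod_eq_of_lt (by omega)
    set g : Fin l → V := fun j => if c ((2*(j:ℕ) : ℕ) : ZMod (2*l)) ∈ S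
      then c ((2*(j:ℕ) : ℕ) : ZMod (2*l)) else c (((2*(j:ℕ) : ℕ) : ZMod (2*l)) + 1) with hg
    have hdesc : ∀ j : Fin l, ∃ m : ZMod (2*l), g j = c m ∧ g j ∈ S ∧
        (m.val = 2*(j:ℕ) ∨ m.val = 2*(j:ℕ)+1) := by
      intro j
      by_cases h' : c ((2*(j:ℕ):ℕ) : ZMod (2*l)) ∈ S
      · exact ⟨_, by rw [hg]; simp only [if_pos h'], by rw [hg]; simp only [if_pos h']; exact h',
          Or.inl (hval j)⟩
      · refine ⟨_, by rw [hg]; simp only [if_neg h'], ?_, Or.inr (hval1 j)⟩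
        rw [hg]; simp only [if_neg h']
        rcases cover _ _ (hcyc ((2*(j:ℕ):ℕ) : ZMod (2*l))) with h | h
        · exact absurd h h'
        · exact h
    have hmem : ∀ j, g j ∈ S ∩ C := by
      intro j
      obtain ⟨m, hm, hmS, _⟩ := hdesc j
      exact ⟨hmS, by rw [hm]; exact ⟨m, rfl⟩⟩
    have hginj : Function.Injective g := by
      intro j j' hjj
      obtain ⟨m, hm, _, hm2⟩ := hdesc j
      obtain ⟨m', hm', _, hm2'⟩ := hdesc j'
      have hmm : m = m' := hinj (by rw [← hm, ← hm', hjj])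
      subst hmm
      have hj := j.isLt
      have hj' := j'.isLt
      apply Fin.ext
      omega
    have hrange : (Set.range g).ncard = l := by
      rw [← Nat.card_coe_set_eq, Nat.card_range_of_injective hginj, Nat.card_eq_fintype_card,
        Fintype.card_fin]
    have hlSC : l ≤ (S ∩ C).ncard := by
      rw [← hrange]
      exact Set.ncard_le_ncard (Set.range_subset_iff.mpr hmem) (S ∩ C).toFinite
    have hSsplit : (S ∩ C).ncard + (S \ C).ncard = S.ncard :=
      Set.ncard_inter_add_ncard_diff_eq_ncard S C S.toFinite
    have hun : T.ncard ≤ (S \ C).ncard + (C ∩ N2 G v).ncard :=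
      Set.ncard_union_le _ _
    rw [hcard] at hun
    omega
end
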